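/- Let S define a full τ-assignment s, and let (θ, θ', χ) in CNF be an optimal output of the counterfactual difference problem with input (S, φ, ψ): S ≡ θ ∧ χ ⊨ φ ∧ ¬ψ, θ' ∧ χ ⊨ ¬φ ∧ ψ, θ' ∧ χ satisfiable iff S satisfiable, total size size(θ)+size(θ')+size(χ) minimal, and size(χ) maximal as secondary criterion. Then both θ ∧ χ and θ' ∧ χ define full τ-assignments (each has exactly one model over τ). -/
import Mathlib


inductive PLF (V : Type) : Type
  | bot  : PLF V
  | var  : V → PLF V
  | neg  : PLF V → PLF V
  | and  : PLF V → PLF V → PLF V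
  | or   : PLF V → PLF V → PLF V

namespace PLF
variable {V : Type}
def eval (s : V → Bool) : PLF V → Bool
  | bot => false
  | var v => s v
  | neg φ => !(eval s φ)
  | and φ ψ => eval s φ && eval s ψ
  | or φ ψ => eval s φ || eval s ψ
end PLF

inductive Lit (V : Type) : Type
  | pos : V → Lit V
  | neg : V → Lit V

namespace Lit
variable {V : Type}
def eval (s : V → Bool) : Lit V → Bool
  | pos v => s v
  | neg v => !(s v)
def compl : Lit V → Lit V
  | pos v => neg v
  | neg v => pos v
def var : Lit V → V
  | pos v => v
  | neg v => v
end Lit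

abbrev Clause (V : Type) := List (Lit V)
abbrev CNF (V : Type) := List (Clause V)

def Clause.ceval {V : Type} (s : V → Bool) (C : Clause V) : Bool := C.any (Lit.eval s)
def CNF.feval {V : Type} (s : V → Bool) (F : CNF V) : Bool := F.all (Clause.ceval s)
def CNF.size {V : Type} (F : CNF V) : Nat := (F.map List.length).sum
def Term.teval {V : Type} (s : V → Bool) (t : List (Lit V)) : Bool := t.all (Lit.eval s)

set_option linter.unusedSectionVars false
namespace StmtAux
variable {V : Type} [DecidableEq V]

def occC : Clause V → V → Nat
  | [], _ => 0
  | l :: C, v => (if l.var = v then 1 else 0) + occC C v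

def occF : CNF V → V → Nat
  | [], _ => 0
  | C :: F, v => occC C v + occF F v

def flp (s : V → Bool) (v : V) : V → Bool := fun w => if w = v then !(s w) else s w

lemma flp_self (s : V → Bool) (v : V) : flp s v v = !(s v) := by simp [flp]

lemma flp_ne_self (s : V → Bool) (v : V) : flp s v ≠ s := by
  intro h
  have := congrFun h v
  simp [flp] at this

lemma flp_apply_ne (s : V → Bool) {v w : V} (h : w ≠ v) : flp s v w = s w := by
  simp [flp, h]

lemma lit_eval_congr {l : Lit V} {u w : V → Bool} (h : u l.var = w l.var) :
    l.eval u = l.eval w := by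
  cases l <;> simp [Lit.eval, Lit.var] at h ⊢ <;> rw [h]

lemma lit_eval_flp_ne {l : Lit V} {v : V} (h : l.var ≠ v) (s : V → Bool) :
    l.eval (flp s v) = l.eval s :=
  lit_eval_congr (flp_apply_ne s h)

lemma lit_eval_flp_eq {l : Lit V} {v : V} (h : l.var = v) (s : V → Bool) :
    l.eval (flp s v) = !(l.eval s) := by
  subst h
  cases l <;> simp [Lit.eval, Lit.var, flp_self]

lemma ceval_cons (s : V → Bool) (l : Lit V) (C : Clause V) :
    Clause.ceval s (l :: C) = (l.eval s || Clause.ceval s C) := by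
  simp [Clause.ceval]

lemma ceval_append (s : V → Bool) (C₁ C₂ : Clause V) :
    Clause.ceval s (C₁ ++ C₂) = (Clause.ceval s C₁ || Clause.ceval s C₂) := by
  simp [Clause.ceval]

lemma feval_cons (s : V → Bool) (C : Clause V) (F : CNF V) :
    CNF.feval s (C :: F) = (Clause.ceval s C && CNF.feval s F) := by
  simp [CNF.feval]

lemma feval_append (s : V → Bool) (F₁ F₂ : CNF V) :
    CNF.feval s (F₁ ++ F₂) = (CNF.feval s F₁ && CNF.feval s F₂) := by
  simp [CNF.feval]

lemma ceval_eq_of_occ_zero (s : V → Bool) {v : V} :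
    ∀ {C : Clause V}, occC C v = 0 → Clause.ceval (flp s v) C = Clause.ceval s C
  | [], _ => rfl
  | l :: C, h => by
    simp only [occC] at h
    have h1 : ¬ (l.var = v) := by
      intro hv; simp [hv] at h
    have h2 : occC C v = 0 := by
      by_contra h2; simp at h; omega
    rw [ceval_cons, ceval_cons, lit_eval_flp_ne h1, ceval_eq_of_occ_zero s h2]

lemma feval_eq_of_occ_zero (s : V → Bool) {v : V} :
    ∀ {F : CNF V}, occF F v = 0 → CNF.feval (flp s v) F = CNF.feval s F
  | [], _ => rfl
  | C :: F, h => by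
    simp only [occF] at h
    have h1 : occC C v = 0 := by omega
    have h2 : occF F v = 0 := by omega
    rw [feval_cons, feval_cons, ceval_eq_of_occ_zero s h1, feval_eq_of_occ_zero s h2]

lemma size_nil : CNF.size ([] : CNF V) = 0 := rfl

lemma size_cons (C : Clause V) (F : CNF V) : CNF.size (C :: F) = C.length + CNF.size F := by
  simp [CNF.size]

lemma size_append (F₁ F₂ : CNF V) : CNF.size (F₁ ++ F₂) = CNF.size F₁ + CNF.size F₂ := by
  simp [CNF.size]

lemma length_eq_sum_occC [Fintype V] (C : Clause V) : C.length = ∑ v, occC C v := by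
  induction C with
  | nil => simp [occC]
  | cons l C ih =>
    simp only [List.length_cons, occC, Finset.sum_add_distrib, Finset.sum_ite_eq,
      Finset.mem_univ, if_true, ← ih]
    omega

lemma size_eq_sum_occF [Fintype V] (F : CNF V) : CNF.size F = ∑ v, occF F v := by
  induction F with
  | nil => simp [CNF.size, occF]
  | cons C F ih =>
    simp only [size_cons, occF, Finset.sum_add_distrib, ih, length_eq_sum_occC]

lemma exists_decomp_clause {C : Clause V} {v : V} (h : occC C v = 1) :
    ∃ C₁ l C₂, C = C₁ ++ l :: C₂ ∧ occC C₁ v = 0 ∧ l.var = v ∧ occC C₂ v = 0 := by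
  induction C with
  | nil => simp [occC] at h
  | cons l C ih =>
    simp only [occC] at h
    by_cases hl : l.var = v
    · refine ⟨[], l, C, rfl, rfl, hl, ?_⟩
      simp [hl] at h; omega
    · simp only [hl, if_false, Nat.zero_add] at h
      obtain ⟨C₁, l', C₂, rfl, h1, h2, h3⟩ := ih h
      exact ⟨l :: C₁, l', C₂, rfl, by simp [occC, hl, h1], h2, h3⟩

lemma exists_decomp_cnf {F : CNF V} {v : V} (h : occF F v = 1) :
    ∃ F₁ C F₂, F = F₁ ++ C :: F₂ ∧ occF F₁ v = 0 ∧ occC C v = 1 ∧ occF F₂ v = 0 := by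
  induction F with
  | nil => simp [occF] at h
  | cons C F ih =>
    simp only [occF] at h
    by_cases hC : occC C v = 0
    · rw [hC, Nat.zero_add] at h
      obtain ⟨F₁, C', F₂, rfl, h1, h2, h3⟩ := ih h
      exact ⟨C :: F₁, C', F₂, rfl, by simp [occF, hC, h1], h2, h3⟩
    · have h1 : occC C v = 1 := by omega
      exact ⟨[], C, F, rfl, rfl, h1, by omega⟩

def litOf (s : V → Bool) (v : V) : Lit V := if s v then Lit.pos v else Lit.neg v

lemma litOf_eval (s u : V → Bool) (v : V) : ((litOf s v).eval u = true) ↔ u v = s v := by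
  by_cases h : s v = true
  · simp [litOf, h, Lit.eval]
  · have h' : s v = false := by simpa using h
    simp [litOf, h', Lit.eval]

noncomputable def unitCNF (s : V → Bool) (A : Finset V) : CNF V := A.toList.map (fun v => [litOf s v])

lemma unitCNF_size (s : V → Bool) (A : Finset V) : CNF.size (unitCNF s A) = A.card := by
  have : ∀ L : List V, (CNF.size (L.map fun v => ([litOf s v] : Clause V))) = L.length := by
    intro L; induction L with
    | nil => rfl
    | cons a L ih => simp [CNF.size] at ih ⊢; omega
  rw [unitCNF, this, Finset.length_toList]

lemma unitCNF_feval (s u : V → Bool) (A : Finset V) :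
    ((unitCNF s A).feval u = true) ↔ ∀ v ∈ A, u v = s v := by
  simp [unitCNF, CNF.feval, Clause.ceval, litOf_eval, Finset.mem_toList]

lemma eq_not_of_ne {a b : Bool} (h : a ≠ b) : a = !b := by
  cases a <;> cases b <;> simp_all

noncomputable def diffs [Fintype V] (s u : V → Bool) : Finset V :=
  Finset.univ.filter (fun w => u w ≠ s w)

lemma mem_diffs [Fintype V] {s u : V → Bool} {v : V} : v ∈ diffs s u ↔ u v ≠ s v := by
  simp [diffs]

lemma card_diffs_flp [Fintype V] {s u : V → Bool} {v : V} (h : u v ≠ s v) :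
    (diffs s (flp u v)).card + 1 = (diffs s u).card := by
  have hset : diffs s (flp u v) = (diffs s u).erase v := by
    ext w
    by_cases hw : w = v
    · subst hw
      simp only [mem_diffs, Finset.mem_erase, flp_self, ne_eq, not_true_eq_false,
        false_and, iff_false, Decidable.not_not]
      cases hs : s w <;> cases hu : u w <;> simp_all
    · simp [mem_diffs, flp_apply_ne _ hw, Finset.mem_erase, hw]
  have hvmem : v ∈ diffs s u := mem_diffs.mpr h
  rw [hset, Finset.card_erase_of_mem hvmem]
  have := Finset.card_pos.mpr ⟨v, hvmem⟩
  omega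

end StmtAux


open StmtAux

theorem stmt9 {V : Type} [Fintype V] (S : Finset (PLF V)) (φ ψ : PLF V) (s : V → Bool)
    (θ θ' χ : CNF V)
    (hdef : ∀ t, (∀ σ ∈ S, σ.eval t = true) ↔ t = s)
    (heqv : ∀ t, (∀ σ ∈ S, σ.eval t = true) ↔ (θ.feval t && χ.feval t) = true)
    (hφ : ∀ t, (θ.feval t && χ.feval t) = true → (φ.and ψ.neg).eval t = true)
    (hψ : ∀ t, (θ'.feval t && χ.feval t) = true → (φ.neg.and ψ).eval t = true)
    (hsat : (∃ t, (θ'.feval t && χ.feval t) = true) ↔ (∃ t, ∀ σ ∈ S, σ.eval t = true))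
    (hmin : ∀ θ₂ θ'₂ χ₂ : CNF V,
      (∀ t, (∀ σ ∈ S, σ.eval t = true) ↔ (θ₂.feval t && χ₂.feval t) = true) →
      (∀ t, (θ₂.feval t && χ₂.feval t) = true → (φ.and ψ.neg).eval t = true) →
      (∀ t, (θ'₂.feval t && χ₂.feval t) = true → (φ.neg.and ψ).eval t = true) →
      ((∃ t, (θ'₂.feval t && χ₂.feval t) = true) ↔ (∃ t, ∀ σ ∈ S, σ.eval t = true)) →
      θ.size + θ'.size + χ.size ≤ θ₂.size + θ'₂.size + χ₂.size)
    (hmax : ∀ θ₂ θ'₂ χ₂ : CNF V,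
      (∀ t, (∀ σ ∈ S, σ.eval t = true) ↔ (θ₂.feval t && χ₂.feval t) = true) →
      (∀ t, (θ₂.feval t && χ₂.feval t) = true → (φ.and ψ.neg).eval t = true) →
      (∀ t, (θ'₂.feval t && χ₂.feval t) = true → (φ.neg.and ψ).eval t = true) →
      ((∃ t, (θ'₂.feval t && χ₂.feval t) = true) ↔ (∃ t, ∀ σ ∈ S, σ.eval t = true)) →
      θ₂.size + θ'₂.size + χ₂.size = θ.size + θ'.size + χ.size →
      χ₂.size ≤ χ.size) :
    (∃ s₁ : V → Bool, ∀ t, (θ.feval t && χ.feval t) = true ↔ t = s₁) ∧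
    (∃ s₂ : V → Bool, ∀ t, (θ'.feval t && χ.feval t) = true ↔ t = s₂) := by
  classical
  have hsS : ∀ σ ∈ S, σ.eval s = true := (hdef s).mpr rfl
  have hts : ∀ u, (θ.feval u && χ.feval u) = true ↔ u = s :=
    fun u => ((heqv u).symm.trans (hdef u))
  have hθχs : (θ.feval s && χ.feval s) = true := (hts s).mpr rfl
  have hsθ : θ.feval s = true := ((Bool.and_eq_true _ _).mp hθχs).1
  have hsχ : χ.feval s = true := ((Bool.and_eq_true _ _).mp hθχs).2
  have hφs : (φ.and ψ.neg).eval s = true := hφ s hθχs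
  have hSsat : ∃ u, ∀ σ ∈ S, σ.eval u = true := ⟨s, hsS⟩
  refine ⟨⟨s, hts⟩, ?_⟩
  obtain ⟨t₀, ht₀⟩ := hsat.mpr hSsat
  have hex : ∃ n, ∃ u, ((θ'.feval u && χ.feval u) = true) ∧ (diffs s u).card = n :=
    ⟨_, t₀, ht₀, rfl⟩
  obtain ⟨t, htM, htd⟩ := Nat.find_spec hex
  set d := Nat.find hex with hd_def
  have hmind : ∀ u, (θ'.feval u && χ.feval u) = true → d ≤ (diffs s u).card :=
    fun u hu => Nat.find_le ⟨u, hu, rfl⟩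
  set D := diffs s t with hD_def
  have hDcard : D.card = d := htd
  have htθ' : θ'.feval t = true := ((Bool.and_eq_true _ _).mp htM).1
  have htχ : χ.feval t = true := ((Bool.and_eq_true _ _).mp htM).2
  have hMs : ¬ ((θ'.feval s && χ.feval s) = true) := by
    intro h
    have h1 := hψ s h
    simp only [PLF.eval, Bool.and_eq_true, Bool.not_eq_true'] at h1 hφs
    rw [h1.1] at hφs
    exact absurd hφs.1 (by simp)
  have hd1 : 1 ≤ d := by
    by_contra h
    have hd0 : D.card = 0 := by omega
    have hts' : t = s := by
      funext v
      by_contra hv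
      have hmem : v ∈ D := by rw [hD_def]; exact mem_diffs.mpr hv
      rw [Finset.card_eq_zero] at hd0
      simp [hd0] at hmem
    exact hMs (hts' ▸ htM)
  have htsv : ∀ v, v ∉ D → t v = s v := by
    intro v hv
    by_contra h
    exact hv (by rw [hD_def]; exact mem_diffs.mpr h)
  -- occurrence lower bounds
  have hL1 : ∀ v, 1 ≤ occF θ v + occF χ v := by
    intro v
    by_contra h
    have h1 : occF θ v = 0 := by omega
    have h2 : occF χ v = 0 := by omega
    have hmod : (θ.feval (flp s v) && χ.feval (flp s v)) = true := by
      rw [feval_eq_of_occ_zero s h1, feval_eq_of_occ_zero s h2]; exact hθχs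
    exact flp_ne_self s v ((hts _).mp hmod)
  have hL2 : ∀ v ∈ D, 1 ≤ occF θ' v + occF χ v := by
    intro v hv
    by_contra h
    have h1 : occF θ' v = 0 := by omega
    have h2 : occF χ v = 0 := by omega
    have hmod : (θ'.feval (flp t v) && χ.feval (flp t v)) = true := by
      rw [feval_eq_of_occ_zero t h1, feval_eq_of_occ_zero t h2]
      exact htM
    have hvd : t v ≠ s v := by
      have : v ∈ diffs s t := by rw [← hD_def]; exact hv
      exact mem_diffs.mp this
    have hflip := card_diffs_flp (s := s) hvd
    have hge := hmind _ hmod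
    rw [← hD_def] at hflip
    omega
  have hLD : ∀ v ∈ D, 2 ≤ occF θ v + occF θ' v + occF χ v := by
    intro v hv
    by_contra hlt
    have hvd : t v ≠ s v := by
      have : v ∈ diffs s t := by rw [← hD_def]; exact hv
      exact mem_diffs.mp this
    have h1 := hL1 v
    have h2 := hL2 v hv
    have hχ1 : occF χ v = 1 := by omega
    have hθ0 : occF θ v = 0 := by omega
    have hθ'0 : occF θ' v = 0 := by omega
    obtain ⟨χ₁, C, χ₅, hχeq, ho1, hoC, ho5⟩ := exists_decomp_cnf hχ1
    obtain ⟨C₁, l, C₂, hCeq, hc1, hlv, hc2⟩ := exists_decomp_clause hoC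
    subst hCeq
    have hsparts := hsχ
    rw [hχeq, feval_append, feval_cons, Bool.and_eq_true, Bool.and_eq_true] at hsparts
    obtain ⟨hs1, hsC, hs5⟩ := hsparts
    have htparts := htχ
    rw [hχeq, feval_append, feval_cons, Bool.and_eq_true, Bool.and_eq_true] at htparts
    obtain ⟨ht1, htC, ht5⟩ := htparts
    have hlts : l.eval t = !(l.eval s) := by
      have hvar : t l.var = !(s l.var) := by
        rw [hlv]; exact eq_not_of_ne hvd
      cases l <;> simp only [Lit.eval, Lit.var] at hvar ⊢ <;> rw [hvar] <;> simp
    by_cases hls : l.eval s = true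
    · -- flip t at v stays a model, closer
      have hltf : l.eval t = false := by rw [hlts, hls]; rfl
      have hor : Clause.ceval t C₁ = true ∨ Clause.ceval t C₂ = true := by
        rw [ceval_append, ceval_cons, hltf, Bool.or_eq_true, Bool.or_eq_true] at htC
        simpa using htC
      have hmod : (θ'.feval (flp t v) && χ.feval (flp t v)) = true := by
        rw [Bool.and_eq_true]
        constructor
        · rw [feval_eq_of_occ_zero t hθ'0]; exact htθ'
        · rw [hχeq, feval_append, feval_cons, Bool.and_eq_true, Bool.and_eq_true]
          refine ⟨by rw [feval_eq_of_occ_zero t ho1]; exact ht1, ?_,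
            by rw [feval_eq_of_occ_zero t ho5]; exact ht5⟩
          rw [ceval_append, ceval_cons, ceval_eq_of_occ_zero t hc1, ceval_eq_of_occ_zero t hc2]
          rcases hor with h | h <;> simp [h]
      have hflip := card_diffs_flp (s := s) hvd
      have hge := hmind _ hmod
      rw [← hD_def] at hflip
      omega
    · -- flip s at v is a second model of θ ∧ χ
      have hlsf : l.eval s = false := by simpa using hls
      have hmod : (θ.feval (flp s v) && χ.feval (flp s v)) = true := by
        rw [Bool.and_eq_true]
        refine ⟨by rw [feval_eq_of_occ_zero s hθ0]; exact hsθ, ?_⟩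
        rw [hχeq, feval_append, feval_cons, Bool.and_eq_true, Bool.and_eq_true]
        refine ⟨by rw [feval_eq_of_occ_zero s ho1]; exact hs1, ?_,
          by rw [feval_eq_of_occ_zero s ho5]; exact hs5⟩
        rw [ceval_append, ceval_cons, lit_eval_flp_eq hlv, hlsf]
        simp
      exact flp_ne_self s v ((hts _).mp hmod)
  -- counting
  have hTsum : CNF.size θ + CNF.size θ' + CNF.size χ
      = ∑ v : V, (occF θ v + occF θ' v + occF χ v) := by
    simp [size_eq_sum_occF, Finset.sum_add_distrib]
  have hLB : ∀ v : V, (if v ∈ D then 2 else 1) ≤ occF θ v + occF θ' v + occF χ v := by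
    intro v
    by_cases hv : v ∈ D
    · simpa [hv] using hLD v hv
    · have := hL1 v; simp [hv]; omega
  have hg : ∑ v : V, (if v ∈ D then 2 else 1) = Fintype.card V + d := by
    have h2 : ∀ v : V, (if v ∈ D then 2 else 1) = 1 + (if v ∈ D then 1 else 0) :=
      fun v => by split <;> rfl
    simp only [h2, Finset.sum_add_distrib, Finset.sum_ite_mem, Finset.univ_inter,
      Finset.sum_const, smul_eq_mul, mul_one, Finset.card_univ]
    omega
  have hlow : Fintype.card V + d ≤ CNF.size θ + CNF.size θ' + CNF.size χ := by
    rw [hTsum, ← hg]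
    exact Finset.sum_le_sum (fun v _ => hLB v)
  have hdn : d ≤ Fintype.card V := by rw [← hDcard]; exact Finset.card_le_univ D
  -- the unit-clause candidate
  have hc1 : ∀ u, ((unitCNF s D).feval u && (unitCNF s Dᶜ).feval u) = true ↔ u = s := by
    intro u
    rw [Bool.and_eq_true, unitCNF_feval, unitCNF_feval]
    constructor
    · rintro ⟨h1, h2⟩
      funext v
      by_cases hv : v ∈ D
      · exact h1 v hv
      · exact h2 v (Finset.mem_compl.mpr hv)
    · rintro rfl
      exact ⟨fun _ _ => rfl, fun _ _ => rfl⟩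
  have hc2 : ∀ u, ((unitCNF t D).feval u && (unitCNF s Dᶜ).feval u) = true ↔ u = t := by
    intro u
    rw [Bool.and_eq_true, unitCNF_feval, unitCNF_feval]
    constructor
    · rintro ⟨h1, h2⟩
      funext v
      by_cases hv : v ∈ D
      · exact h1 v hv
      · rw [h2 v (Finset.mem_compl.mpr hv), htsv v hv]
    · rintro rfl
      exact ⟨fun _ _ => rfl, fun v hv => htsv v (Finset.mem_compl.mp hv)⟩
  have hup := hmin (unitCNF s D) (unitCNF t D) (unitCNF s Dᶜ)
      (fun u => (hdef u).trans (hc1 u).symm)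
      (fun u hu => by rw [(hc1 u).mp hu]; exact hφs)
      (fun u hu => by rw [(hc2 u).mp hu]; exact hψ t htM)
      ⟨fun _ => hSsat, fun _ => ⟨t, (hc2 t).mpr rfl⟩⟩
  rw [unitCNF_size, unitCNF_size, unitCNF_size, Finset.card_compl, hDcard] at hup
  have hTeq : CNF.size θ + CNF.size θ' + CNF.size χ = Fintype.card V + d := by omega
  -- exact occurrence count outside D
  have hE1 : ∀ v, v ∉ D → occF θ v + occF θ' v + occF χ v = 1 := by
    intro v₀ hv₀
    by_contra hne
    have h2 : 2 ≤ occF θ v₀ + occF θ' v₀ + occF χ v₀ := by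
      have := hL1 v₀; omega
    have hs1 := Finset.add_sum_erase Finset.univ
      (fun v => occF θ v + occF θ' v + occF χ v) (Finset.mem_univ v₀)
    have hs2 := Finset.add_sum_erase Finset.univ
      (fun v : V => if v ∈ D then 2 else 1) (Finset.mem_univ v₀)
    have hrest : ∑ v ∈ Finset.univ.erase v₀, (if v ∈ D then 2 else 1)
        ≤ ∑ v ∈ Finset.univ.erase v₀, (occF θ v + occF θ' v + occF χ v) :=
      Finset.sum_le_sum (fun v _ => hLB v)
    beta_reduce at hs1 hs2
    simp only [if_neg hv₀] at hs2
    rw [hTsum] at hTeq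
    rw [hg] at hs2
    omega
  -- key: every variable outside D is pinned by a unit clause of χ
  have hkey : ∀ v, v ∉ D → ∃ l : Lit V, l.var = v ∧ l.eval s = true ∧
      ∀ u, (θ'.feval u && χ.feval u) = true → l.eval u = true := by
    intro v hv
    have hE := hE1 v hv
    have h1 := hL1 v
    have htv : t v = s v := htsv v hv
    by_cases hcase : occF χ v = 1
    · -- the single occurrence of v is in χ
      have hθ0 : occF θ v = 0 := by omega
      obtain ⟨χ₁, C, χ₅, hχeq, ho1, hoC, ho5⟩ := exists_decomp_cnf hcase
      obtain ⟨C₁, l, C₂, hCeq, hc1, hlv, hc2⟩ := exists_decomp_clause hoC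
      subst hCeq
      have hsparts := hsχ
      rw [hχeq, feval_append, feval_cons, Bool.and_eq_true, Bool.and_eq_true] at hsparts
      obtain ⟨hs1, hsC, hs5⟩ := hsparts
      have htparts := htχ
      rw [hχeq, feval_append, feval_cons, Bool.and_eq_true, Bool.and_eq_true] at htparts
      obtain ⟨ht1, htC, ht5⟩ := htparts
      have hmodflip : ¬ ((θ.feval (flp s v) && χ.feval (flp s v)) = true) :=
        fun h => flp_ne_self s v ((hts _).mp h)
      have hχflipf : χ.feval (flp s v) = false := by
        by_contra h
        exact hmodflip (by
          rw [Bool.and_eq_true, feval_eq_of_occ_zero s hθ0]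
          exact ⟨hsθ, by simpa using h⟩)
      have hCdata : Clause.ceval s C₁ = false ∧ l.eval s = true ∧ Clause.ceval s C₂ = false := by
        have h2 := hχflipf
        rw [hχeq, feval_append, feval_cons] at h2
        rw [feval_eq_of_occ_zero s ho1, feval_eq_of_occ_zero s ho5, hs1, hs5] at h2
        have h3 : Clause.ceval (flp s v) (C₁ ++ l :: C₂) = false := by
          simpa using h2
        rw [ceval_append, ceval_cons, ceval_eq_of_occ_zero s hc1, ceval_eq_of_occ_zero s hc2,
          lit_eval_flp_eq hlv] at h3
        simp only [Bool.or_eq_false_iff, Bool.not_eq_false'] at h3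
        exact ⟨h3.1, h3.2.1, h3.2.2⟩
      obtain ⟨hC1f, hls, hC2f⟩ := hCdata
      by_cases hnil : C₁ = [] ∧ C₂ = []
      · -- the clause is the unit clause [l]
        obtain ⟨h01, h02⟩ := hnil
        subst h01; subst h02
        refine ⟨l, hlv, hls, ?_⟩
        intro u hu
        have huχ : χ.feval u = true := ((Bool.and_eq_true _ _).mp hu).2
        rw [hχeq, feval_append, feval_cons, Bool.and_eq_true, Bool.and_eq_true] at huχ
        simpa [Clause.ceval] using huχ.2.1
      · -- shrink the clause to [l] : contradiction with minimality
        exfalso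
        have hlen : 1 ≤ C₁.length + C₂.length := by
          by_contra hh
          push_neg at hh
          have hl1 : C₁.length = 0 := by omega
          have hl2 : C₂.length = 0 := by omega
          exact hnil ⟨List.length_eq_zero_iff.mp hl1, List.length_eq_zero_iff.mp hl2⟩
        have hiffn : ∀ u, (θ.feval u && CNF.feval u (χ₁ ++ [l] :: χ₅)) = true ↔ u = s := by
          intro u
          constructor
          · intro hu
            rw [Bool.and_eq_true, feval_append, feval_cons, Bool.and_eq_true, Bool.and_eq_true] at hu
            obtain ⟨huθ, hu1, huC, hu5⟩ := hu
            have hul : l.eval u = true := by simpa [Clause.ceval] using huC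
            apply (hts u).mp
            rw [Bool.and_eq_true, hχeq, feval_append, feval_cons, Bool.and_eq_true, Bool.and_eq_true]
            exact ⟨huθ, hu1, by rw [ceval_append, ceval_cons, hul]; simp, hu5⟩
          · rintro rfl
            rw [Bool.and_eq_true, feval_append, feval_cons, Bool.and_eq_true, Bool.and_eq_true]
            exact ⟨hsθ, hs1, by simpa [Clause.ceval] using hls, hs5⟩
        have hc3 : ∀ u, (θ'.feval u && CNF.feval u (χ₁ ++ [l] :: χ₅)) = true →
            (φ.neg.and ψ).eval u = true := by
          intro u hu
          apply hψ u
          rw [Bool.and_eq_true, feval_append, feval_cons, Bool.and_eq_true, Bool.and_eq_true] at hu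
          obtain ⟨huθ', hu1, huC, hu5⟩ := hu
          have hul : l.eval u = true := by simpa [Clause.ceval] using huC
          rw [Bool.and_eq_true, hχeq, feval_append, feval_cons, Bool.and_eq_true, Bool.and_eq_true]
          exact ⟨huθ', hu1, by rw [ceval_append, ceval_cons, hul]; simp, hu5⟩
        have hc4 : (∃ u, (θ'.feval u && CNF.feval u (χ₁ ++ [l] :: χ₅)) = true)
            ↔ (∃ u, ∀ σ ∈ S, σ.eval u = true) := by
          refine ⟨fun _ => hSsat, fun _ => ⟨t, ?_⟩⟩
          rw [Bool.and_eq_true, feval_append, feval_cons, Bool.and_eq_true, Bool.and_eq_true]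
          have hlt : l.eval t = true := by
            rw [lit_eval_congr (show t l.var = s l.var by rw [hlv]; exact htv)]
            exact hls
          exact ⟨htθ', ht1, by simpa [Clause.ceval] using hlt, ht5⟩
        have hminap := hmin θ θ' (χ₁ ++ [l] :: χ₅)
          (fun u => (hdef u).trans (hiffn u).symm)
          (fun u hu => by rw [(hiffn u).mp hu]; exact hφs)
          hc3 hc4
        have hsz1 : CNF.size χ = CNF.size χ₁ + (C₁.length + 1 + C₂.length) + CNF.size χ₅ := by
          rw [hχeq, size_append, size_cons]
          simp [List.length_append]
          omega
        have hsz2 : CNF.size (χ₁ ++ [l] :: χ₅) = CNF.size χ₁ + 1 + CNF.size χ₅ := by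
          rw [size_append, size_cons]
          simp
          omega
        omega
    · -- the single occurrence of v is in θ : impossible
      exfalso
      have hχ0 : occF χ v = 0 := by
        have h3 := hL2 v
        omega
      have hθ1 : occF θ v = 1 := by omega
      obtain ⟨θ₁, C, θ₅, hθeq, ho1, hoC, ho5⟩ := exists_decomp_cnf hθ1
      obtain ⟨C₁, l, C₂, hCeq, hc1, hlv, hc2⟩ := exists_decomp_clause hoC
      subst hCeq
      have hsparts := hsθ
      rw [hθeq, feval_append, feval_cons, Bool.and_eq_true, Bool.and_eq_true] at hsparts
      obtain ⟨hs1, hsC, hs5⟩ := hsparts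
      have hmodflip : ¬ ((θ.feval (flp s v) && χ.feval (flp s v)) = true) :=
        fun h => flp_ne_self s v ((hts _).mp h)
      have hθflipf : θ.feval (flp s v) = false := by
        by_contra h
        exact hmodflip (by
          rw [Bool.and_eq_true, feval_eq_of_occ_zero s hχ0]
          exact ⟨by simpa using h, hsχ⟩)
      have hCdata : Clause.ceval s C₁ = false ∧ l.eval s = true ∧ Clause.ceval s C₂ = false := by
        have h2 := hθflipf
        rw [hθeq, feval_append, feval_cons] at h2
        rw [feval_eq_of_occ_zero s ho1, feval_eq_of_occ_zero s ho5, hs1, hs5] at h2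
        have h3 : Clause.ceval (flp s v) (C₁ ++ l :: C₂) = false := by
          simpa using h2
        rw [ceval_append, ceval_cons, ceval_eq_of_occ_zero s hc1, ceval_eq_of_occ_zero s hc2,
          lit_eval_flp_eq hlv] at h3
        simp only [Bool.or_eq_false_iff, Bool.not_eq_false'] at h3
        exact ⟨h3.1, h3.2.1, h3.2.2⟩
      obtain ⟨hC1f, hls, hC2f⟩ := hCdata
      by_cases hnil : C₁ = [] ∧ C₂ = []
      · -- move the unit clause from θ to χ : contradiction with maximality of χ
        obtain ⟨h01, h02⟩ := hnil
        subst h01; subst h02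
        have hiffn : ∀ u, (CNF.feval u (θ₁ ++ θ₅) && CNF.feval u ([l] :: χ)) = true
            ↔ u = s := by
          intro u
          constructor
          · intro hu
            simp only [feval_append, feval_cons, Bool.and_eq_true] at hu
            obtain ⟨⟨hu1, hu5⟩, huC, huχ⟩ := hu
            have hul : l.eval u = true := by simpa [Clause.ceval] using huC
            apply (hts u).mp
            rw [hθeq]
            simp only [feval_append, feval_cons, Bool.and_eq_true]
            exact ⟨⟨hu1, by simpa [Clause.ceval] using hul, hu5⟩, huχ⟩
          · rintro rfl
            simp only [feval_append, feval_cons, Bool.and_eq_true]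
            exact ⟨⟨hs1, hs5⟩, by simpa [Clause.ceval] using hls, hsχ⟩
        have hc3 : ∀ u, (θ'.feval u && CNF.feval u ([l] :: χ)) = true →
            (φ.neg.and ψ).eval u = true := by
          intro u hu
          apply hψ u
          rw [Bool.and_eq_true, feval_cons, Bool.and_eq_true] at hu
          exact (Bool.and_eq_true _ _).mpr ⟨hu.1, hu.2.2⟩
        have hc4 : (∃ u, (θ'.feval u && CNF.feval u ([l] :: χ)) = true)
            ↔ (∃ u, ∀ σ ∈ S, σ.eval u = true) := by
          refine ⟨fun _ => hSsat, fun _ => ⟨t, ?_⟩⟩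
          rw [Bool.and_eq_true, feval_cons, Bool.and_eq_true]
          have hlt : l.eval t = true := by
            rw [lit_eval_congr (show t l.var = s l.var by rw [hlv]; exact htv)]
            exact hls
          exact ⟨htθ', by simpa [Clause.ceval] using hlt, htχ⟩
        have hsz1 : CNF.size θ = CNF.size θ₁ + 1 + CNF.size θ₅ := by
          rw [hθeq, size_append, size_cons]
          simp
          omega
        have hsz2 : CNF.size (θ₁ ++ θ₅) = CNF.size θ₁ + CNF.size θ₅ := size_append _ _
        have hsz3 : CNF.size ([l] :: χ) = 1 + CNF.size χ := by
          rw [size_cons]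
          simp
        have hmaxap := hmax (θ₁ ++ θ₅) θ' ([l] :: χ)
          (fun u => (hdef u).trans (hiffn u).symm)
          (fun u hu => by rw [(hiffn u).mp hu]; exact hφs)
          hc3 hc4 (by omega)
        omega
      · -- shrink the clause to [l] : contradiction with minimality
        have hlen : 1 ≤ C₁.length + C₂.length := by
          by_contra hh
          push_neg at hh
          have hl1 : C₁.length = 0 := by omega
          have hl2 : C₂.length = 0 := by omega
          exact hnil ⟨List.length_eq_zero_iff.mp hl1, List.length_eq_zero_iff.mp hl2⟩
        have hiffn : ∀ u, (CNF.feval u (θ₁ ++ [l] :: θ₅) && χ.feval u) = true ↔ u = s := by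
          intro u
          constructor
          · intro hu
            rw [Bool.and_eq_true, feval_append, feval_cons, Bool.and_eq_true, Bool.and_eq_true] at hu
            obtain ⟨⟨hu1, huC, hu5⟩, huχ⟩ := hu
            have hul : l.eval u = true := by simpa [Clause.ceval] using huC
            apply (hts u).mp
            rw [Bool.and_eq_true, hθeq, feval_append, feval_cons, Bool.and_eq_true, Bool.and_eq_true]
            exact ⟨⟨hu1, by rw [ceval_append, ceval_cons, hul]; simp, hu5⟩, huχ⟩
          · rintro rfl
            rw [Bool.and_eq_true, feval_append, feval_cons, Bool.and_eq_true, Bool.and_eq_true]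
            exact ⟨⟨hs1, by simpa [Clause.ceval] using hls, hs5⟩, hsχ⟩
        have hminap := hmin (θ₁ ++ [l] :: θ₅) θ' χ
          (fun u => (hdef u).trans (hiffn u).symm)
          (fun u hu => by rw [(hiffn u).mp hu]; exact hφs)
          hψ hsat
        have hsz1 : CNF.size θ = CNF.size θ₁ + (C₁.length + 1 + C₂.length) + CNF.size θ₅ := by
          rw [hθeq, size_append, size_cons]
          simp [List.length_append]
          omega
        have hsz2 : CNF.size (θ₁ ++ [l] :: θ₅) = CNF.size θ₁ + 1 + CNF.size θ₅ := by
          rw [size_append, size_cons]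
          simp
          omega
        omega
  -- assemble: t is the unique model of θ' ∧ χ
  refine ⟨t, fun u => ⟨fun hu => ?_, fun h => h ▸ htM⟩⟩
  have hout : ∀ v, v ∉ D → u v = s v := by
    intro v hv
    obtain ⟨l, hlv, hls, hall⟩ := hkey v hv
    have h1 := hall u hu
    cases l with
    | pos w =>
      simp only [Lit.var] at hlv
      subst hlv
      simp only [Lit.eval] at h1 hls
      rw [h1, hls]
    | neg w =>
      simp only [Lit.var] at hlv
      subst hlv
      simp only [Lit.eval, Bool.not_eq_true'] at h1 hls
      rw [h1, hls]
  have hsub : diffs s u ⊆ D := by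
    intro v hv
    by_contra hvD
    exact (mem_diffs.mp hv) (hout v hvD)
  have hcard : D.card ≤ (diffs s u).card := by
    rw [hDcard]
    exact hmind u hu
  have heqD : diffs s u = D := Finset.eq_of_subset_of_card_le hsub hcard
  funext v
  by_cases hv : v ∈ D
  · have h1 : u v ≠ s v := mem_diffs.mp (heqD ▸ hv)
    have h2 : t v ≠ s v := by
      have : v ∈ diffs s t := by rw [← hD_def]; exact hv
      exact mem_diffs.mp this
    rw [eq_not_of_ne h1, eq_not_of_ne h2]
  · rw [hout v hv, htsv v hv]
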